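/- For k ≥ 1, consider the commutative square in Cat whose corners are Λ⁰, Λ^{k−1}, Λ¹ and Λ^k, with: u : Λ⁰ → Λ^{k−1} sending the unique element to the vertex k−1; v : Λ⁰ → Λ¹ sending the unique element to the vertex 0; i : Λ^{k−1} → Λ^k the inclusion (identity on vertices 0,…,k−1 and edges e₀,…,e_{k−2}); and j : Λ¹ → Λ^k sending vertex 0 to vertex k−1, vertex 1 to vertex k, and the edge e₀ to the edge e_{k−1}. Then i ∘ u = j ∘ v, and this square is a pushout square in the category Cat of categories. -/

import Mathlib

open CategoryTheory

/-- The poset `Λ^k`: elements are the vertices `0, …, k` (left summand) and the edges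
`e₀, …, e_{k−1}` (right summand), ordered so that `eᵢ ≤ i` and `eᵢ ≤ i+1` and there are no
other relations between distinct elements. -/
def Lambda (k : ℕ) : Type := Fin (k + 1) ⊕ Fin k

namespace Lambda

/-- The order relation on `Λ^k`. -/
def le {k : ℕ} : Lambda k → Lambda k → Prop
  | Sum.inl i, Sum.inl j => i = j
  | Sum.inl _, Sum.inr _ => False
  | Sum.inr i, Sum.inl j => (j : ℕ) = i ∨ (j : ℕ) = (i : ℕ) + 1
  | Sum.inr i, Sum.inr j => i = j

instance (k : ℕ) : PartialOrder (Lambda k) where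
  le := le
  le_refl x := by cases x <;> simp [le]
  le_trans x y z hxy hyz := by cases x <;> cases y <;> cases z <;> simp_all [le]
  le_antisymm x y hxy hyx := by cases x <;> cases y <;> simp_all [le] <;> rfl

/-- The vertex `i` of `Λ^k`. -/
abbrev vertex {k : ℕ} (i : Fin (k + 1)) : Lambda k := Sum.inl i

/-- The edge `eᵢ` of `Λ^k`. -/
abbrev edge {k : ℕ} (i : Fin k) : Lambda k := Sum.inr i

end Lambda

/-- `u : Λ⁰ ⥤ Λ^{k-1}` (here `k - 1 = m`), sending the unique element to the last
vertex `m = k - 1`. -/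
def uF (m : ℕ) : Lambda 0 ⥤ Lambda m :=
  Monotone.functor
    (f := fun _ => Lambda.vertex ⟨m, Nat.lt_succ_self m⟩) (fun _ _ _ => le_refl _)

/-- `v : Λ⁰ ⥤ Λ¹`, sending the unique element to the vertex `0`. -/
def vF : Lambda 0 ⥤ Lambda 1 :=
  Monotone.functor
    (f := fun _ => Lambda.vertex ⟨0, by omega⟩) (fun _ _ _ => le_refl _)

/-- The underlying map of the inclusion `i : Λ^{k-1} → Λ^k` (here `k - 1 = m`). -/
def iMap (m : ℕ) : Lambda m → Lambda (m + 1)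
  | Sum.inl i => Sum.inl i.castSucc
  | Sum.inr e => Sum.inr e.castSucc

theorem iMap_mono (m : ℕ) : Monotone (iMap m) := by
  intro x y h
  change Lambda.le x y at h
  change Lambda.le (iMap m x) (iMap m y)
  cases x <;> cases y <;>
    simp_all [iMap, Lambda.le, show ∀ a b : Lambda m, (a ≤ b) = Lambda.le a b from
      fun _ _ => rfl, show ∀ a b : Lambda (m + 1), (a ≤ b) = Lambda.le a b from
      fun _ _ => rfl]

/-- The inclusion functor `i : Λ^{k-1} ⥤ Λ^k` (identity on the vertices `0, …, k-1` and the
edges `e₀, …, e_{k-2}`). -/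
def iF (m : ℕ) : Lambda m ⥤ Lambda (m + 1) := Monotone.functor (iMap_mono m)

/-- The underlying map of `j : Λ¹ → Λ^k`, sending vertex `0` to vertex `k-1`, vertex `1` to
vertex `k` and the edge `e₀` to the edge `e_{k-1}` (here `k - 1 = m`). -/
def jMap (m : ℕ) : Lambda 1 → Lambda (m + 1)
  | Sum.inl v => Sum.inl ⟨m + v, by have := v.isLt; omega⟩
  | Sum.inr _ => Sum.inr ⟨m, Nat.lt_succ_self m⟩

theorem jMap_mono (m : ℕ) : Monotone (jMap m) := by
  intro x y h
  change Lambda.le x y at h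
  change Lambda.le (jMap m x) (jMap m y)
  cases x <;> cases y <;>
    simp_all [jMap, Lambda.le, show ∀ a b : Lambda 1, (a ≤ b) = Lambda.le a b from
      fun _ _ => rfl, show ∀ a b : Lambda (m + 1), (a ≤ b) = Lambda.le a b from
      fun _ _ => rfl] <;> omega

/-- The functor `j : Λ¹ ⥤ Λ^k`. -/
def jF (m : ℕ) : Lambda 1 ⥤ Lambda (m + 1) := Monotone.functor (jMap_mono m)

lemma Lambda.hom_ext' {k : ℕ} {x y : Lambda k} (f g : x ⟶ y) : f = g := Subsingleton.elim _ _

lemma Lambda.map_id_eq {k : ℕ} {D : Type*} [Category D] (H K : Lambda k ⥤ D) (x : Lambda k)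
    (h : H.obj x = K.obj x) : H.map (𝟙 x) = eqToHom h ≫ K.map (𝟙 x) ≫ eqToHom h.symm := by
  simp

section Desc

variable {m : ℕ} {C : Type*} [Category C] (F : Lambda m ⥤ C) (G : Lambda 1 ⥤ C)

/-- Object part of the functor induced by the universal property. -/
def descObj : Lambda (m + 1) → C
  | Sum.inl i => if h : (i : ℕ) < m + 1 then F.obj (Sum.inl ⟨i, h⟩) else G.obj (Sum.inl 1)
  | Sum.inr i => if h : (i : ℕ) < m then F.obj (Sum.inr ⟨i, h⟩) else G.obj (Sum.inr 0)

lemma descObj_inl_pos (j : Fin (m + 1 + 1)) (h : (j : ℕ) < m + 1) :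
    descObj F G (Sum.inl j) = F.obj (Sum.inl ⟨j, h⟩) := dif_pos h

lemma descObj_inl_neg (j : Fin (m + 1 + 1)) (h : ¬ (j : ℕ) < m + 1) :
    descObj F G (Sum.inl j) = G.obj (Sum.inl 1) := dif_neg h

lemma descObj_inr_pos (j : Fin (m + 1)) (h : (j : ℕ) < m) :
    descObj F G (Sum.inr j) = F.obj (Sum.inr ⟨j, h⟩) := dif_pos h

lemma descObj_inr_neg (j : Fin (m + 1)) (h : ¬ (j : ℕ) < m) :
    descObj F G (Sum.inr j) = G.obj (Sum.inr 0) := dif_neg h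

/-- Morphism part of the induced functor. -/
def descHom (hobj : F.obj (Sum.inl ⟨m, Nat.lt_succ_self m⟩) = G.obj (Sum.inl 0)) :
    ∀ x y : Lambda (m + 1), x ≤ y → (descObj F G x ⟶ descObj F G y)
  | Sum.inl i, Sum.inl j, h => eqToHom (by cases (show i = j from h); rfl)
  | Sum.inl _, Sum.inr _, h => (show False from h).elim
  | Sum.inr i, Sum.inr j, h => eqToHom (by cases (show i = j from h); rfl)
  | Sum.inr i, Sum.inl j, h =>
    have h' : (j : ℕ) = (i : ℕ) ∨ (j : ℕ) = (i : ℕ) + 1 := h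
    if hi : (i : ℕ) < m then
      have hj : (j : ℕ) < m + 1 := by rcases h' with h' | h' <;> omega
      eqToHom (descObj_inr_pos F G i hi) ≫
        F.map (homOfLE (show Lambda.le (Sum.inr ⟨i, hi⟩) (Sum.inl ⟨j, hj⟩) from h')) ≫
        eqToHom (descObj_inl_pos F G j hj).symm
    else
      if hj : (j : ℕ) < m + 1 then
        have hjm : (j : ℕ) = m := by
          have := i.isLt; rcases h' with h' | h' <;> omega
        eqToHom (descObj_inr_neg F G i hi) ≫
          G.map (homOfLE (show Lambda.le (Sum.inr 0) (Sum.inl 0) from Or.inl rfl)) ≫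
          eqToHom hobj.symm ≫
          eqToHom (congrArg F.obj (congrArg Sum.inl
            (Fin.ext hjm.symm : (⟨m, Nat.lt_succ_self m⟩ : Fin (m + 1)) = ⟨j, hj⟩))) ≫
          eqToHom (descObj_inl_pos F G j hj).symm
      else
        eqToHom (descObj_inr_neg F G i hi) ≫
          G.map (homOfLE (show Lambda.le (Sum.inr 0) (Sum.inl 1) from Or.inr rfl)) ≫
          eqToHom (descObj_inl_neg F G j hj).symm

variable (hobj : F.obj (Sum.inl ⟨m, Nat.lt_succ_self m⟩) = G.obj (Sum.inl 0))

lemma descHom_refl (x : Lambda (m + 1)) (h : x ≤ x) :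
    descHom F G hobj x x h = 𝟙 (descObj F G x) := by
  obtain i | i := x
  · simp [descHom]
  · simp [descHom]

lemma descHom_refl_comp (x z : Lambda (m + 1)) (h : x ≤ x) (h2 h3 : x ≤ z) :
    descHom F G hobj x z h3 = descHom F G hobj x x h ≫ descHom F G hobj x z h2 := by
  rw [descHom_refl, Category.id_comp]

lemma descHom_comp_refl (x z : Lambda (m + 1)) (h : z ≤ z) (h2 h3 : x ≤ z) :
    descHom F G hobj x z h3 = descHom F G hobj x z h2 ≫ descHom F G hobj z z h := by
  rw [descHom_refl, Category.comp_id]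

lemma descHom_comp (x y z : Lambda (m + 1)) (h1 : x ≤ y) (h2 : y ≤ z) :
    descHom F G hobj x z (h1.trans h2) =
      descHom F G hobj x y h1 ≫ descHom F G hobj y z h2 := by
  obtain i | i := x
  · obtain j | j := y
    · obtain k | k := z
      · obtain rfl : i = j := h1
        exact descHom_refl_comp F G hobj _ _ _ _ _
      · exact (show False from h2).elim
    · exact (show False from h1).elim
  · obtain j | j := y
    · obtain k | k := z
      · obtain rfl : j = k := h2
        exact descHom_comp_refl F G hobj _ _ _ _ _
      · exact (show False from h2).elim
    · obtain rfl : i = j := h1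
      exact descHom_refl_comp F G hobj _ _ _ _ _

lemma descHom_edge_lt (i : Fin (m + 1)) (j : Fin (m + 1 + 1)) (h : Lambda.le (k := m + 1) (Sum.inr i) (Sum.inl j))
    (hi : (i : ℕ) < m) (hj : (j : ℕ) < m + 1) :
    descHom F G hobj (Sum.inr i) (Sum.inl j) h =
      eqToHom (descObj_inr_pos F G i hi) ≫
        F.map (homOfLE (show Lambda.le (Sum.inr ⟨i, hi⟩) (Sum.inl ⟨j, hj⟩) from h)) ≫
        eqToHom (descObj_inl_pos F G j hj).symm := by
  simp only [descHom]
  rw [dif_pos hi]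

lemma descHom_edge_mid (i : Fin (m + 1)) (j : Fin (m + 1 + 1)) (h : Lambda.le (k := m + 1) (Sum.inr i) (Sum.inl j))
    (hi : ¬ (i : ℕ) < m) (hj : (j : ℕ) < m + 1) :
    descHom F G hobj (Sum.inr i) (Sum.inl j) h =
      eqToHom (descObj_inr_neg F G i hi) ≫
        G.map (homOfLE (show Lambda.le (Sum.inr 0) (Sum.inl 0) from Or.inl rfl)) ≫
        eqToHom hobj.symm ≫
        eqToHom (congrArg F.obj (congrArg Sum.inl
          (Fin.ext (show (m : ℕ) = (j : ℕ) by
            rcases (show (j : ℕ) = (i : ℕ) ∨ (j : ℕ) = (i : ℕ) + 1 from h) with h' | h' <;>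
              (have := i.isLt; omega)) :
            (⟨m, Nat.lt_succ_self m⟩ : Fin (m + 1)) = ⟨j, hj⟩))) ≫
        eqToHom (descObj_inl_pos F G j hj).symm := by
  simp only [descHom]
  rw [dif_neg hi, dif_pos hj]

lemma descHom_edge_top (i : Fin (m + 1)) (j : Fin (m + 1 + 1)) (h : Lambda.le (k := m + 1) (Sum.inr i) (Sum.inl j))
    (hi : ¬ (i : ℕ) < m) (hj : ¬ (j : ℕ) < m + 1) :
    descHom F G hobj (Sum.inr i) (Sum.inl j) h =
      eqToHom (descObj_inr_neg F G i hi) ≫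
        G.map (homOfLE (show Lambda.le (Sum.inr 0) (Sum.inl 1) from Or.inr rfl)) ≫
        eqToHom (descObj_inl_neg F G j hj).symm := by
  simp only [descHom]
  rw [dif_neg hi, dif_neg hj]

/-- The induced functor `Λ^{m+1} ⥤ C`. -/
def descF : Lambda (m + 1) ⥤ C where
  obj := descObj F G
  map {x y} f := descHom F G hobj x y (leOfHom f)
  map_id x := descHom_refl F G hobj x _
  map_comp {x y z} f g := descHom_comp F G hobj x y z (leOfHom f) (leOfHom g)

end Desc
section Fac

variable {m : ℕ} {C : Type*} [Category C] (F : Lambda m ⥤ C) (G : Lambda 1 ⥤ C)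
variable (hobj : F.obj (Sum.inl ⟨m, Nat.lt_succ_self m⟩) = G.obj (Sum.inl 0))

lemma iF_comp_descF : iF m ⋙ descF F G hobj = F := by
  refine CategoryTheory.Functor.ext (fun x => ?_) (fun x y f => ?_)
  · obtain i | i := x
    · exact descObj_inl_pos F G i.castSucc i.isLt
    · exact descObj_inr_pos F G i.castSucc i.isLt
  · obtain i | i := x <;> obtain j | j := y
    · obtain rfl : i = j := leOfHom f
      rw [Lambda.hom_ext' f (𝟙 _)]
      exact Lambda.map_id_eq _ _ _ _
    · exact (show False from leOfHom f).elim
    · show descHom F G hobj (Sum.inr i.castSucc) (Sum.inl j.castSucc) (iMap_mono m (leOfHom f)) = _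
      refine (descHom_edge_lt F G hobj i.castSucc j.castSucc _ i.isLt j.isLt).trans ?_
      rw [show homOfLE _ = f from Lambda.hom_ext' _ _]
      rfl
    · obtain rfl : i = j := leOfHom f
      rw [Lambda.hom_ext' f (𝟙 _)]
      exact Lambda.map_id_eq _ _ _ _

lemma jF_comp_descF : jF m ⋙ descF F G hobj = G := by
  refine CategoryTheory.Functor.ext (fun x => ?_) (fun x y f => ?_)
  · obtain i | i := x
    · match i with
      | ⟨0, h⟩ =>
        exact (descObj_inl_pos F G ⟨m + 0, by omega⟩ (Nat.lt_succ_self m)).trans hobj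
      | ⟨1, h⟩ =>
        exact descObj_inl_neg F G ⟨m + 1, by omega⟩ (Nat.lt_irrefl (m + 1))
    · match i with
      | ⟨0, h⟩ => exact descObj_inr_neg F G ⟨m, Nat.lt_succ_self m⟩ (Nat.lt_irrefl m)
  · obtain i | i := x <;> obtain j | j := y
    · obtain rfl : i = j := leOfHom f
      rw [Lambda.hom_ext' f (𝟙 _)]
      exact Lambda.map_id_eq _ _ _ _
    · exact (show False from leOfHom f).elim
    · match i, j, f with
      | ⟨0, hi⟩, ⟨0, hj⟩, f =>
        show descHom F G hobj (Sum.inr ⟨m, Nat.lt_succ_self m⟩) (Sum.inl ⟨m + 0, by omega⟩) (jMap_mono m (leOfHom f)) = _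
        refine (descHom_edge_mid F G hobj ⟨m, Nat.lt_succ_self m⟩ ⟨m + 0, by omega⟩ _
          (Nat.lt_irrefl m) (Nat.lt_succ_self m)).trans ?_
        simp only [eqToHom_trans, Category.assoc]
        rfl
      | ⟨0, hi⟩, ⟨1, hj⟩, f =>
        show descHom F G hobj (Sum.inr ⟨m, Nat.lt_succ_self m⟩) (Sum.inl ⟨m + 1, by omega⟩) (jMap_mono m (leOfHom f)) = _
        refine (descHom_edge_top F G hobj ⟨m, Nat.lt_succ_self m⟩ ⟨m + 1, by omega⟩ _
          (Nat.lt_irrefl m) (Nat.lt_irrefl (m + 1))).trans ?_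
        rfl
    · obtain rfl : i = j := leOfHom f
      rw [Lambda.hom_ext' f (𝟙 _)]
      exact Lambda.map_id_eq _ _ _ _

end Fac
section Uniq

variable {m : ℕ} {C : Type*} [Category C]

lemma desc_unique (H K : Lambda (m + 1) ⥤ C)
    (h1 : iF m ⋙ H = iF m ⋙ K) (h2 : jF m ⋙ H = jF m ⋙ K) : H = K := by
  refine CategoryTheory.Functor.ext (fun x => ?_) (fun x y f => ?_)
  · obtain ⟨xv, hx⟩ | ⟨xv, hx⟩ := x
    · by_cases h : xv < m + 1
      · exact Functor.congr_obj h1 (Sum.inl ⟨xv, h⟩)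
      · obtain rfl : xv = m + 1 := by omega
        exact Functor.congr_obj h2 (Sum.inl 1)
    · by_cases h : xv < m
      · exact Functor.congr_obj h1 (Sum.inr ⟨xv, h⟩)
      · obtain rfl : xv = m := by omega
        exact Functor.congr_obj h2 (Sum.inr 0)
  · obtain i | i := x <;> obtain j | j := y
    · obtain rfl : i = j := leOfHom f
      rw [Lambda.hom_ext' f (𝟙 _)]
      exact Lambda.map_id_eq _ _ _ _
    · exact (show False from leOfHom f).elim
    · -- edge i to vertex j
      obtain ⟨iv, hi⟩ := i
      obtain ⟨jv, hj⟩ := j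
      have hle : jv = iv ∨ jv = iv + 1 := leOfHom f
      by_cases hiv : iv < m
      · have hjv : jv < m + 1 := by omega
        have hf : f = (iF m).map (homOfLE (show Lambda.le (k := m)
            (Sum.inr ⟨iv, hiv⟩) (Sum.inl ⟨jv, hjv⟩) from hle)) := Lambda.hom_ext' _ _
        rw [hf]
        exact Functor.congr_hom h1 _
      · obtain rfl : m = iv := by omega
        by_cases hjv : jv < m + 1
        · obtain rfl : m = jv := by omega
          have hf : f = (jF m).map (homOfLE (show Lambda.le (k := 1)
              (Sum.inr 0) (Sum.inl 0) from Or.inl rfl)) := Lambda.hom_ext' _ _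
          rw [hf]
          exact Functor.congr_hom h2 _
        · obtain rfl : jv = m + 1 := by omega
          have hf : f = (jF m).map (homOfLE (show Lambda.le (k := 1)
              (Sum.inr 0) (Sum.inl 1) from Or.inr rfl)) := Lambda.hom_ext' _ _
          rw [hf]
          exact Functor.congr_hom h2 _
    · obtain rfl : i = j := leOfHom f
      rw [Lambda.hom_ext' f (𝟙 _)]
      exact Lambda.map_id_eq _ _ _ _

end Uniq

lemma comm_lemma (m : ℕ) : uF m ⋙ iF m = vF ⋙ jF m := by
  refine CategoryTheory.Functor.ext (fun x => ?_) (fun x y f => ?_)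
  · rfl
  · exact Subsingleton.elim _ _
abbrev LPushoutCocone (m : ℕ) :=
  Limits.PushoutCocone
    (show Cat.of (Lambda 0) ⟶ Cat.of (Lambda m) from (uF m).toCatHom)
    (show Cat.of (Lambda 0) ⟶ Cat.of (Lambda 1) from vF.toCatHom)

/-- The descent functor for a pushout cocone in `Cat`. -/
def theDesc (m : ℕ) (s : LPushoutCocone m) : Cat.of (Lambda (m + 1)) ⟶ s.pt :=
  (descF (C := ↥s.pt) s.inl.toFunctor s.inr.toFunctor
    (Functor.congr_obj (congrArg Cat.Hom.toFunctor s.condition) (Lambda.vertex 0 : Lambda 0))).toCatHom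

/-- for `k ≥ 1` (here `k = m + 1`) the square with corners
`Λ⁰, Λ^{k-1}, Λ¹, Λ^k`, with `u, v, i, j` as above, commutes (`i ∘ u = j ∘ v`) and is a
pushout square in `Cat`. -/
theorem stmt10 (m : ℕ) :
    (uF m ⋙ iF m = vF ⋙ jF m) ∧
    IsPushout
      (show Cat.of (Lambda 0) ⟶ Cat.of (Lambda m) from (uF m).toCatHom)
      (show Cat.of (Lambda 0) ⟶ Cat.of (Lambda 1) from vF.toCatHom)
      (show Cat.of (Lambda m) ⟶ Cat.of (Lambda (m + 1)) from (iF m).toCatHom)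
      (show Cat.of (Lambda 1) ⟶ Cat.of (Lambda (m + 1)) from (jF m).toCatHom) := by
  refine ⟨comm_lemma m, ?_⟩
  refine IsPushout.of_isColimit (Limits.PushoutCocone.IsColimit.mk (by exact Cat.ext (comm_lemma m))
    (theDesc m)
    (fun s => Cat.ext (iF_comp_descF s.inl.toFunctor s.inr.toFunctor _))
    (fun s => Cat.ext (jF_comp_descF s.inl.toFunctor s.inr.toFunctor _))
    (fun s n hn1 hn2 => ?_))
  exact Cat.ext (desc_unique n.toFunctor _
    ((congrArg Cat.Hom.toFunctor hn1).trans (iF_comp_descF s.inl.toFunctor s.inr.toFunctor _).symm)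
    ((congrArg Cat.Hom.toFunctor hn2).trans (jF_comp_descF s.inl.toFunctor s.inr.toFunctor _).symm))
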